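/- Let r ∈ ℕ, l < r, and let G_r be the group of permutations of ℕ supported on {0,…,r−1}. Then for any set I of partial injections on ℕ closed under right composition with elements of G_r: {f ∈ I : |im(f) ∩ r| ≤ l} = ⋂_{σ ∈ G_r} {f ∈ I : im(fσ) ⊉ {0,…,l}} = ⋂_{σ ∈ G_r} ({f ∈ I : im(f) ⊉ {0,…,l}} σ^{-1}). -/
import Mathlib


open Set Classical

noncomputable section

/-- A partial injection (partial bijection) on ℕ, viewed as a set of pairs. -/
def IsPInj (g : Set (ℕ × ℕ)) : Prop :=
  ∀ ⦃a b c d : ℕ⦄, (a, b) ∈ g → (c, d) ∈ g → (a = c ↔ b = d)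

/-- Domain of a partial injection. -/
def pdom (g : Set (ℕ × ℕ)) : Set ℕ := {x | ∃ y, (x, y) ∈ g}

/-- Image of a partial injection. -/
def pim (g : Set (ℕ × ℕ)) : Set ℕ := {y | ∃ x, (x, y) ∈ g}

/-- Restriction of a partial injection to `{0, …, r-1}`. -/
def pres (g : Set (ℕ × ℕ)) (r : ℕ) : Set (ℕ × ℕ) := {p ∈ g | p.1 < r}

/-- A waning function `f : ω + 1 → ω + 1`. -/
def Waning (f : ℕ∞ → ℕ∞) : Prop :=
  Antitone f ∧
    ((∀ i, f i = ⊤) ∨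
      ((∃ i : ℕ, f i ≠ ⊤) ∧
        ∀ j : ℕ, f j ≠ 0 → f j ≠ ⊤ → f ((j + 1 : ℕ)) < f j))

/-- Right composition of a partial injection with a permutation of `ℕ`. -/
def pcp (f : Set (ℕ × ℕ)) (σ : Equiv.Perm ℕ) : Set (ℕ × ℕ) :=
  (fun p : ℕ × ℕ => (p.1, σ p.2)) '' f

lemma pcp_pcp (f : Set (ℕ × ℕ)) (σ τ : Equiv.Perm ℕ) :
    pcp (pcp f σ) τ = pcp f (σ.trans τ) := by
  unfold pcp
  rw [← Set.image_comp]
  rfl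

lemma pcp_refl (f : Set (ℕ × ℕ)) : pcp f (Equiv.refl ℕ) = f := by
  unfold pcp; simp

lemma pcp_pcp_symm (f : Set (ℕ × ℕ)) (σ : Equiv.Perm ℕ) : pcp (pcp f σ) σ.symm = f := by
  rw [pcp_pcp]
  have : σ.trans σ.symm = Equiv.refl ℕ := by ext x; simp
  rw [this, pcp_refl]

lemma pcp_symm_pcp (f : Set (ℕ × ℕ)) (σ : Equiv.Perm ℕ) : pcp (pcp f σ.symm) σ = f := by
  have := pcp_pcp_symm f σ.symm
  simpa using this

lemma pim_pcp (f : Set (ℕ × ℕ)) (σ : Equiv.Perm ℕ) : pim (pcp f σ) = σ '' pim f := by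
  ext y
  constructor
  · rintro ⟨x, p, hp, heq⟩
    exact ⟨p.2, ⟨p.1, hp⟩, by simpa using congrArg Prod.snd heq⟩
  · rintro ⟨b, ⟨a, hab⟩, rfl⟩
    exact ⟨a, (a, b), hab, rfl⟩

lemma encard_Iic_nat (l : ℕ) : (Set.Iic l).encard = (l + 1 : ℕ) := by
  rw [← Finset.coe_Iic, Set.encard_coe_eq_coe_finsetCard, Nat.card_Iic]

lemma exists_good_perm (r l : ℕ) (hlr : l < r) (S : Set ℕ) (hSr : S ⊆ {x | x < r})
    (hcard : S.encard = (l + 1 : ℕ)) :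
    ∃ σ : Equiv.Perm ℕ, (∀ x, r ≤ x → σ x = x) ∧ ∀ y ≤ l, y ∈ σ '' S := by
  have hfin : S.Finite := Set.finite_of_encard_eq_coe hcard
  have hsF : hfin.toFinset.card = l + 1 := by
    have := hfin.encard_eq_coe_toFinset_card
    rw [hcard] at this
    exact_mod_cast this.symm
  have hAr : ∀ m ∈ hfin.toFinset, m < r := fun m hm => hSr (hfin.mem_toFinset.1 hm)
  have hBr : ∀ m ∈ Finset.Iic l, m < r := fun m hm => lt_of_le_of_lt (Finset.mem_Iic.1 hm) hlr
  set A : Finset (Fin r) := hfin.toFinset.attachFin hAr with hA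
  set B : Finset (Fin r) := (Finset.Iic l).attachFin hBr with hB
  have hAcard : A.card = l + 1 := by rw [hA, Finset.card_attachFin, hsF]
  have hBcard : B.card = l + 1 := by rw [hB, Finset.card_attachFin, Nat.card_Iic]
  have hcards : A.card = B.card := by rw [hAcard, hBcard]
  set e : {x : Fin r // x ∈ A} ≃ {x : Fin r // x ∈ B} := Finset.equivOfCardEq hcards with he
  set π : Equiv.Perm (Fin r) := Equiv.extendSubtype e with hπ
  set σ : Equiv.Perm ℕ := π.extendDomain Fin.equivSubtype with hσ
  have himg : A.image π = B := by
    apply Finset.eq_of_subset_of_card_le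
    · intro b hb
      obtain ⟨a, ha, rfl⟩ := Finset.mem_image.1 hb
      exact Equiv.extendSubtype_mem e a ha
    · rw [hBcard, Finset.card_image_of_injective _ π.injective, hAcard]
  refine ⟨σ, ?_, ?_⟩
  · intro x hx
    exact Equiv.Perm.extendDomain_apply_not_subtype π Fin.equivSubtype (not_lt.2 hx)
  · intro y hy
    have hyr : y < r := lt_of_le_of_lt hy hlr
    have hyB : (⟨y, hyr⟩ : Fin r) ∈ B := by
      rw [hB, Finset.mem_attachFin]
      exact Finset.mem_Iic.2 hy
    rw [← himg] at hyB
    obtain ⟨a, haA, hae⟩ := Finset.mem_image.1 hyB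
    refine ⟨(a : ℕ), hfin.mem_toFinset.1 ((Finset.mem_attachFin hAr).1 haA), ?_⟩
    have key : σ ((Fin.equivSubtype a : {i : ℕ // i < r}) : ℕ) =
        ((Fin.equivSubtype (π a) : {i : ℕ // i < r}) : ℕ) :=
      Equiv.Perm.extendDomain_apply_image π Fin.equivSubtype a
    simpa [Fin.equivSubtype, hae] using key

/-- For `l < r` and `G_r` the permutations supported on `{0,…,r−1}`, for any set `I` of
partial injections closed under right composition with elements of `G_r`:
`{f ∈ I : |im(f) ∩ r| ≤ l} = ⋂_{σ ∈ G_r} {f ∈ I : im(fσ) ⊉ {0,…,l}}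
= ⋂_{σ ∈ G_r} ({f ∈ I : im(f) ⊉ {0,…,l}} σ⁻¹)`. -/
theorem inter_description (r l : ℕ) (hlr : l < r) (I : Set (Set (ℕ × ℕ)))
    (hIp : ∀ f ∈ I, IsPInj f)
    (hI : ∀ f ∈ I, ∀ σ : Equiv.Perm ℕ, (∀ x, r ≤ x → σ x = x) → pcp f σ ∈ I) :
    ({f ∈ I | (pim f ∩ {y | y < r}).encard ≤ (l : ℕ∞)} =
      ⋂ σ ∈ {σ : Equiv.Perm ℕ | ∀ x, r ≤ x → σ x = x},
        {f ∈ I | ¬ ∀ y ≤ l, y ∈ pim (pcp f σ)}) ∧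
    ((⋂ σ ∈ {σ : Equiv.Perm ℕ | ∀ x, r ≤ x → σ x = x},
        {f ∈ I | ¬ ∀ y ≤ l, y ∈ pim (pcp f σ)}) =
      ⋂ σ ∈ {σ : Equiv.Perm ℕ | ∀ x, r ≤ x → σ x = x},
        (fun f => pcp f σ.symm) '' {f ∈ I | ¬ ∀ y ≤ l, y ∈ pim f}) := by
  constructor
  · ext f
    simp only [Set.mem_setOf_eq, Set.mem_iInter]
    constructor
    · rintro ⟨hfI, hcard⟩ σ hσ
      refine ⟨hfI, fun h => ?_⟩
      have hsub : σ.symm '' (Set.Iic l) ⊆ pim f ∩ {y | y < r} := by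
        rintro _ ⟨y, hy, rfl⟩
        have hy' := h y hy
        rw [pim_pcp] at hy'
        obtain ⟨b, hb, hby⟩ := hy'
        have hbe : σ.symm y = b := by rw [← hby]; simp
        constructor
        · rw [hbe]; exact hb
        · show σ.symm y < r
          simp only [Set.mem_Iic] at hy
          by_contra hge
          have h1 : σ (σ.symm y) = σ.symm y := hσ _ (not_lt.1 hge)
          rw [Equiv.apply_symm_apply] at h1
          omega
      have hle : ((l + 1 : ℕ) : ℕ∞) ≤ ((l : ℕ) : ℕ∞) := by
        calc ((l + 1 : ℕ) : ℕ∞) = (σ.symm '' Set.Iic l).encard := by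
              rw [σ.symm.injective.encard_image _, encard_Iic_nat]
          _ ≤ (pim f ∩ {y | y < r}).encard := Set.encard_mono hsub
          _ ≤ (l : ℕ∞) := hcard
      rw [Nat.cast_le] at hle
      omega
    · intro h
      have hfI : f ∈ I := (h 1 (fun x _ => rfl)).1
      refine ⟨hfI, ?_⟩
      by_contra hcard
      have hlt : (l : ℕ∞) < (pim f ∩ {y | y < r}).encard := not_le.1 hcard
      have hsucc : ((l + 1 : ℕ) : ℕ∞) ≤ (pim f ∩ {y | y < r}).encard := by
        push_cast
        exact (ENat.add_one_le_iff (by simp)).2 hlt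
      obtain ⟨S, hSsub, hScard⟩ := Set.exists_subset_encard_eq hsucc
      obtain ⟨σ, hσ, hmem⟩ := exists_good_perm r l hlr S (fun x hx => (hSsub hx).2) hScard
      refine (h σ hσ).2 (fun y hy => ?_)
      rw [pim_pcp]
      exact Set.image_mono (fun x hx => (hSsub hx).1) (hmem y hy)
  · apply Set.iInter₂_congr
    intro σ hσ
    have hσ' : ∀ x, r ≤ x → σ.symm x = x := by
      intro x hx
      calc σ.symm x = σ.symm (σ x) := by rw [hσ x hx]
        _ = x := σ.symm_apply_apply x
    ext f
    simp only [Set.mem_setOf_eq, Set.mem_image]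
    constructor
    · rintro ⟨hfI, hcond⟩
      exact ⟨pcp f σ, ⟨hI f hfI σ hσ, hcond⟩, pcp_pcp_symm f σ⟩
    · rintro ⟨g, ⟨hgI, hcond⟩, rfl⟩
      refine ⟨hI g hgI σ.symm hσ', ?_⟩
      rw [pcp_symm_pcp]
      exact hcond
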